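/- (Large Hermite stencil, fifth order) Let $u$ be $C^5$ with cell averages $\bar u_i$ and average derivatives $\Delta u_i$ on uniform cells of width $h$. Then $\frac{1}{120}\big(-23\bar u_{j-1} + 76\bar u_{j} + 67\bar u_{j+1} - 9h\Delta u_{j-1} - 21h\Delta u_{j+1}\big) = u(x_{j+1/2}) + O(h^5)$ as $h\to 0$. -/

import Mathlib

open Filter Asymptotics

noncomputable def Tay (f : ℝ → ℝ) (x0 : ℝ) (n : ℕ) (t : ℝ) : ℝ :=
  ∑ k ∈ Finset.range (n+1), iteratedDeriv k f x0 / (k.factorial : ℝ) * t ^ k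

lemma Tay_zero (f : ℝ → ℝ) (x0 : ℝ) (n : ℕ) : Tay f x0 n 0 = f x0 := by
  rw [Tay, Finset.sum_eq_single 0]
  · simp
  · intro k _ hk
    simp [zero_pow hk]
  · simp

lemma hasDerivAt_Tay (f : ℝ → ℝ) (x0 : ℝ) (n : ℕ) (t : ℝ) :
    HasDerivAt (fun s => Tay f x0 (n+1) s) (Tay (deriv f) x0 n t) t := by
  have h : HasDerivAt (fun s => Tay f x0 (n+1) s)
      (∑ k ∈ Finset.range (n+2),
        iteratedDeriv k f x0 / (k.factorial : ℝ) * ((k : ℝ) * t ^ (k-1))) t := by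
    unfold Tay
    exact HasDerivAt.fun_sum fun k _ => (hasDerivAt_pow k t).const_mul _
  convert h using 1
  rw [show n + 2 = (n+1) + 1 from rfl, Finset.sum_range_succ']
  simp only [Nat.cast_zero, zero_mul, mul_zero, add_zero]
  rw [Tay]
  apply Finset.sum_congr rfl
  intro k _
  rw [iteratedDeriv_succ']
  have : ((k+1).factorial : ℝ) = (k+1 : ℝ) * (k.factorial : ℝ) := by
    push_cast [Nat.factorial_succ]; ring
  rw [this]
  have hk : (k.factorial : ℝ) ≠ 0 := Nat.cast_ne_zero.mpr k.factorial_ne_zero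
  have hk1 : (k+1 : ℝ) ≠ 0 := by positivity
  field_simp
  simp only [show k + 1 - 1 = k by omega, Nat.cast_add, Nat.cast_one]
  ring

lemma isBigO_of_deriv (g g' : ℝ → ℝ) (m : ℕ) (hg : ∀ t, HasDerivAt g (g' t) t)
    (h0 : g 0 = 0) (hO : g' =O[nhds (0:ℝ)] fun t => t ^ m) :
    g =O[nhds (0:ℝ)] fun t => t ^ (m+1) := by
  obtain ⟨C, hC⟩ := hO.bound
  rw [Metric.eventually_nhds_iff] at hC
  obtain ⟨ε, hε, hCb⟩ := hC
  set C' := max C 0 with hC'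
  have hC'0 : 0 ≤ C' := le_max_right _ _
  rw [isBigO_iff]
  refine ⟨C', Metric.eventually_nhds_iff.mpr ⟨ε, hε, fun h hh => ?_⟩⟩
  simp only [Real.dist_eq, sub_zero] at hh hCb
  have hb : ∀ t ∈ Set.Icc (-|h|) |h|, ‖g' t‖ ≤ C' * |h| ^ m := by
    intro t ht
    have hta : |t| ≤ |h| := abs_le.mpr ⟨ht.1, ht.2⟩
    have hbb := hCb (lt_of_le_of_lt hta hh)
    calc ‖g' t‖ ≤ C * |t| ^ m := by simpa [norm_pow, Real.norm_eq_abs] using hbb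
      _ ≤ C' * |t| ^ m := mul_le_mul_of_nonneg_right (le_max_left _ _) (pow_nonneg (abs_nonneg t) m)
      _ ≤ C' * |h| ^ m := mul_le_mul_of_nonneg_left (pow_le_pow_left₀ (abs_nonneg t) hta m) hC'0
  have key := (convex_Icc (-|h|) |h|).norm_image_sub_le_of_norm_hasDerivWithin_le
      (fun t ht => (hg t).hasDerivWithinAt) hb
      (Set.mem_Icc.mpr ⟨neg_abs_le h, le_abs_self h⟩)
      (Set.mem_Icc.mpr ⟨neg_nonpos.mpr (abs_nonneg h), abs_nonneg h⟩)
  simp only [h0, zero_sub, norm_neg, Real.norm_eq_abs] at key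
  calc ‖g h‖ ≤ C' * |h| ^ m * |h| := key
    _ = C' * ‖h ^ (m+1)‖ := by rw [norm_pow, Real.norm_eq_abs, pow_succ]; ring

lemma taylor_isBigO : ∀ (n : ℕ) (f : ℝ → ℝ), ContDiff ℝ (n+1 : ℕ) f → ∀ x0 : ℝ,
    (fun t => f (x0 + t) - Tay f x0 n t) =O[nhds (0:ℝ)] fun t => t ^ (n+1) := by
  intro n
  induction n with
  | zero =>
    intro f hf x0
    have hd : DifferentiableAt ℝ f x0 := (hf.differentiable (by simp)).differentiableAt
    have h1 := hd.isBigO_sub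
    have h2 : Filter.Tendsto (fun t : ℝ => x0 + t) (nhds 0) (nhds x0) := by
      simpa using Continuous.tendsto (by continuity : Continuous fun t : ℝ => x0 + t) 0
    have h3 := h1.comp_tendsto h2
    simp only [Function.comp_def] at h3
    refine (h3.congr (fun t => ?_) (fun t => ?_))
    · simp [Tay]
    · show x0 + t - x0 = t ^ 1
      ring
  | succ n ih =>
    intro f hf x0
    have hf2 : ContDiff ℝ (((n+1 : ℕ) : WithTop ℕ∞) + 1) f := by
      exact_mod_cast hf
    have h1 : Differentiable ℝ f := (contDiff_succ_iff_deriv.mp hf2).1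
    have h2 : ContDiff ℝ (n+1 : ℕ) (deriv f) := by
      exact_mod_cast (contDiff_succ_iff_deriv.mp hf2).2.2
    have hO := ih (deriv f) h2 x0
    apply isBigO_of_deriv _ (fun t => deriv f (x0+t) - Tay (deriv f) x0 n t) (n+1)
    · intro t
      have hfc : HasDerivAt (fun t => f (x0 + t)) (deriv f (x0+t)) t := by
        have hh := (h1 (x0+t)).hasDerivAt
        have := hh.comp t ((hasDerivAt_id t).const_add x0)
        simpa [Function.comp_def] using this
      exact hfc.sub (hasDerivAt_Tay f x0 n t)
    · simp [Tay_zero]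
    · exact hO

/-- Large Hermite stencil: the combination
`(1/120)(-23 ū_{j-1} + 76 ū_j + 67 ū_{j+1} - 9h Δu_{j-1} - 21h Δu_{j+1})`
recovers `u(x_{j+1/2})` to fifth order. -/
theorem stmt15 (u : ℝ → ℝ) (hu : ContDiff ℝ 5 u) (x0 : ℝ) :
    (fun h : ℝ =>
        1 / 120 *
            (-23 * ((1 / h) * ∫ x in (x0 - 2 * h)..(x0 - h), u x)
              + 76 * ((1 / h) * ∫ x in (x0 - h)..x0, u x)
              + 67 * ((1 / h) * ∫ x in x0..(x0 + h), u x)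
              - 9 * h * ((u (x0 - h) - u (x0 - 2 * h)) / h)
              - 21 * h * ((u (x0 + h) - u x0) / h))
          - u x0)
      =O[nhdsWithin 0 (Set.Ioi 0)] (fun h : ℝ => h ^ 5) := by
  have hcu : Continuous u := hu.continuous
  set U : ℝ → ℝ := fun x => ∫ t in x0..x, u t with hUdef
  have hU' : ∀ x, HasDerivAt U (u x) x := fun x =>
    intervalIntegral.integral_hasDerivAt_right (hcu.intervalIntegrable _ _)
      (hcu.stronglyMeasurableAtFilter _ _) hcu.continuousAt
  have hderivU : deriv U = u := funext fun x => (hU' x).deriv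
  have hUdiff : Differentiable ℝ U := fun x => (hU' x).differentiableAt
  have hU6 : ContDiff ℝ ((5:ℕ)+1 : ℕ) U := by
    have : ContDiff ℝ (((5:ℕ) : WithTop ℕ∞) + 1) U := by
      refine contDiff_succ_iff_deriv.mpr ⟨hUdiff, ?_, ?_⟩
      · intro hcon; exact absurd hcon (by simp)
      · rw [hderivU]; exact_mod_cast hu
    exact_mod_cast this
  have hu5 : ContDiff ℝ ((4:ℕ)+1 : ℕ) u := by exact_mod_cast hu
  have htend : ∀ c : ℝ, Filter.Tendsto (fun h : ℝ => c * h)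
      (nhdsWithin 0 (Set.Ioi 0)) (nhds 0) := by
    intro c
    have : Filter.Tendsto (fun h : ℝ => c * h) (nhds 0) (nhds 0) := by
      simpa using Continuous.tendsto (by continuity : Continuous fun h : ℝ => c * h) 0
    exact this.mono_left nhdsWithin_le_nhds
  -- remainder terms
  have hA : ∀ c : ℝ, (fun h : ℝ => (U (x0 + c * h) - Tay U x0 5 (c * h)) * h⁻¹)
      =O[nhdsWithin 0 (Set.Ioi 0)] fun h => h ^ 5 := by
    intro c
    have h1 := (taylor_isBigO 5 U hU6 x0).comp_tendsto (htend c)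
    have h2 : (fun h : ℝ => (c * h) ^ (5+1)) =O[nhdsWithin 0 (Set.Ioi 0)] fun h => h ^ 6 := by
      apply IsBigO.of_bound (|c| ^ 6)
      filter_upwards with h
      simp [mul_pow, abs_mul, abs_pow, mul_comm]
    have h3 := (h1.trans h2).mul (isBigO_refl (fun h : ℝ => h⁻¹) _)
    refine h3.congr' EventuallyEq.rfl ?_
    filter_upwards [self_mem_nhdsWithin] with h hh
    have hne : h ≠ 0 := ne_of_gt hh
    field_simp
  have hB : ∀ c : ℝ, (fun h : ℝ => u (x0 + c * h) - Tay u x0 4 (c * h))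
      =O[nhdsWithin 0 (Set.Ioi 0)] fun h => h ^ 5 := by
    intro c
    have h1 := (taylor_isBigO 4 u hu5 x0).comp_tendsto (htend c)
    refine h1.trans ?_
    apply IsBigO.of_bound (|c| ^ 5)
    filter_upwards with h
    simp [mul_pow, abs_mul, abs_pow, mul_comm]
  have hFO :
      (fun h : ℝ => 1/120 *
        (-23 * ((U (x0 + (-1) * h) - Tay U x0 5 ((-1) * h)) * h⁻¹
                  - (U (x0 + (-2) * h) - Tay U x0 5 ((-2) * h)) * h⁻¹)
          + 76 * ((U (x0 + 0 * h) - Tay U x0 5 (0 * h)) * h⁻¹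
                  - (U (x0 + (-1) * h) - Tay U x0 5 ((-1) * h)) * h⁻¹)
          + 67 * ((U (x0 + 1 * h) - Tay U x0 5 (1 * h)) * h⁻¹
                  - (U (x0 + 0 * h) - Tay U x0 5 (0 * h)) * h⁻¹)
          - 9 * ((u (x0 + (-1) * h) - Tay u x0 4 ((-1) * h))
                  - (u (x0 + (-2) * h) - Tay u x0 4 ((-2) * h)))
          - 21 * ((u (x0 + 1 * h) - Tay u x0 4 (1 * h))
                  - (u (x0 + 0 * h) - Tay u x0 4 (0 * h)))))
      =O[nhdsWithin 0 (Set.Ioi 0)] fun h => h ^ 5 := by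
    have t1 := ((hA (-1)).sub (hA (-2))).const_mul_left (-23)
    have t2 := ((hA 0).sub (hA (-1))).const_mul_left 76
    have t3 := ((hA 1).sub (hA 0)).const_mul_left 67
    have t4 := ((hB (-1)).sub (hB (-2))).const_mul_left 9
    have t5 := ((hB 1).sub (hB 0)).const_mul_left 21
    exact ((((t1.add t2).add t3).sub t4).sub t5).const_mul_left (1/120)
  have hint : ∀ a b : ℝ, (∫ x in a..b, u x) = U b - U a := fun a b =>
    (intervalIntegral.integral_interval_sub_left (hcu.intervalIntegrable _ _)
      (hcu.intervalIntegrable _ _)).symm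
  have hUk : ∀ k : ℕ, iteratedDeriv (k+1) U x0 = iteratedDeriv k u x0 := fun k => by
    rw [iteratedDeriv_succ', hderivU]
  have k1 : iteratedDeriv 1 U x0 = u x0 := by simpa using hUk 0
  have k2 : iteratedDeriv 2 U x0 = iteratedDeriv 1 u x0 := hUk 1
  have k3 : iteratedDeriv 3 U x0 = iteratedDeriv 2 u x0 := hUk 2
  have k4 : iteratedDeriv 4 U x0 = iteratedDeriv 3 u x0 := hUk 3
  have k5 : iteratedDeriv 5 U x0 = iteratedDeriv 4 u x0 := hUk 4
  refine hFO.congr' ?_ EventuallyEq.rfl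
  filter_upwards [self_mem_nhdsWithin] with h hh
  have hne : h ≠ 0 := ne_of_gt hh
  rw [hint, hint, hint]
  have p1 : x0 - h = x0 + (-1) * h := by ring
  have p2 : x0 - 2 * h = x0 + (-2) * h := by ring
  have p3 : x0 + h = x0 + 1 * h := by ring
  rw [p1, p2, p3]
  simp only [Tay, Finset.sum_range_succ, Finset.sum_range_zero, iteratedDeriv_zero,
    Nat.factorial, k1, k2, k3, k4, k5]
  push_cast
  field_simp
  ring
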